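/- For p an odd prime and k a field of characteristic p, the element (x_3 x_4 x_5 x_6)^{p-1} does not belong to the ideal (x_1x_2 + x_3x_4 + x_5x_6, x_1^p, x_2^p, x_3^p, x_4^p, x_5^p, x_6^p) of k[x_1,...,x_6]. -/
import Mathlib

open MvPolynomial in
/-- If two polynomials have no monomials involving variable `i`, neither does their product. -/
private lemma good_mul {σ : Type*} {R : Type*} [CommSemiring R] {i : σ}
    {q₁ q₂ : MvPolynomial σ R}
    (h₁ : ∀ d : σ →₀ ℕ, d i ≠ 0 → coeff d q₁ = 0)
    (h₂ : ∀ d : σ →₀ ℕ, d i ≠ 0 → coeff d q₂ = 0) :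
    ∀ d : σ →₀ ℕ, d i ≠ 0 → coeff d (q₁ * q₂) = 0 := by
  classical
  intro d hd
  rw [coeff_mul]
  apply Finset.sum_eq_zero
  rintro ⟨a, b⟩ hab
  have hab' : a + b = d := Finset.HasAntidiagonal.mem_antidiagonal.mp hab
  have : a i + b i = d i := by rw [← hab']; simp
  rcases Nat.eq_zero_or_pos (a i) with h | h
  · have : b i ≠ 0 := by omega
    simp [h₂ b this]
  · simp [h₁ a (by omega)]

open MvPolynomial in
private lemma good_pow {σ : Type*} {R : Type*} [CommSemiring R] {i : σ}
    {q : MvPolynomial σ R}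
    (h : ∀ d : σ →₀ ℕ, d i ≠ 0 → coeff d q = 0) (m : ℕ) :
    ∀ d : σ →₀ ℕ, d i ≠ 0 → coeff d (q ^ m) = 0 := by
  classical
  induction m with
  | zero =>
      intro d hd
      rw [pow_zero, coeff_one, if_neg]
      intro h0
      exact hd (by rw [← h0]; simp)
  | succ m ih =>
      rw [pow_succ]
      exact good_mul ih h



open MvPolynomial in
/-- For `p` an odd prime and `k` a field of characteristic `p`, the element
`(x₃x₄x₅x₆)^(p-1)` does not belong to the ideal
`(x₁x₂ + x₃x₄ + x₅x₆, x₁^p, …, x₆^p)` of `k[x₁,…,x₆]`. -/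
theorem prod_pow_not_mem_quadric_ideal
    (p : ℕ) (hp : p.Prime) (hodd : p ≠ 2) (k : Type*) [Field k] [CharP k p] :
    (X 2 * X 3 * X 4 * X 5 : MvPolynomial (Fin 6) k) ^ (p - 1) ∉
      Ideal.span {(X 0 * X 1 + X 2 * X 3 + X 4 * X 5 : MvPolynomial (Fin 6) k),
        (X 0 : MvPolynomial (Fin 6) k) ^ p, (X 1 : MvPolynomial (Fin 6) k) ^ p,
        (X 2 : MvPolynomial (Fin 6) k) ^ p, (X 3 : MvPolynomial (Fin 6) k) ^ p,
        (X 4 : MvPolynomial (Fin 6) k) ^ p, (X 5 : MvPolynomial (Fin 6) k) ^ p} := by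
  haveI := Fact.mk hp
  intro hmem
  set n := p - 1 with hn
  have hpn : p = n + 1 := (Nat.succ_pred_eq_of_pos hp.pos).symm
  set f : MvPolynomial (Fin 6) k := X 0 * X 1 + X 2 * X 3 + X 4 * X 5 with hf
  -- the socle monomial
  set M : Fin 6 →₀ ℕ := Finsupp.equivFunOnFinite.symm fun _ => n with hMdef
  have hM : ∀ i, M i = n := fun i => rfl
  -- key: multiplying by X i ^ p kills the coefficient at M
  have key : ∀ (q : MvPolynomial (Fin 6) k) (i : Fin 6), coeff M (q * X i ^ p) = 0 := by
    intro q i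
    rw [X_pow_eq_monomial, coeff_mul_monomial', if_neg]
    intro h
    have := Finsupp.single_le_iff.mp h
    rw [hM] at this
    omega
  -- Frobenius on f
  have hfp : f ^ p = X 0 ^ p * X 1 ^ p + (X 2 ^ p * X 3 ^ p + X 4 ^ p * X 5 ^ p) := by
    have : f = (X 0 * X 1 + X 2 * X 3) + X 4 * X 5 := by rw [hf]
    rw [this, add_pow_char, add_pow_char, mul_pow, mul_pow, mul_pow]
    ring
  -- span induction
  have main : ∀ r : MvPolynomial (Fin 6) k,
      coeff M (r * (X 2 * X 3 * X 4 * X 5) ^ n * f ^ n) = 0 := by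
    refine Submodule.span_induction
      (p := fun q _ => ∀ r : MvPolynomial (Fin 6) k, coeff M (r * q * f ^ n) = 0)
      ?_ ?_ ?_ ?_ hmem
    · intro q hq r
      simp only [Set.mem_insert_iff, Set.mem_singleton_iff] at hq
      rcases hq with h | h | h | h | h | h | h
      · -- q = f
        have : r * q * f ^ n = r * f ^ p := by
          rw [h, hpn, pow_succ]; ring
        rw [this, hfp]
        have e0 : r * (X 0 ^ p * X 1 ^ p + (X 2 ^ p * X 3 ^ p + X 4 ^ p * X 5 ^ p))
            = (r * X 1 ^ p) * X 0 ^ p + ((r * X 3 ^ p) * X 2 ^ p + (r * X 5 ^ p) * X 4 ^ p) := by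
          ring
        rw [e0, coeff_add, coeff_add, key, key, key]
        ring
      all_goals
        rw [h]
        rw [show r * (X _ ^ p) * f ^ n = (r * f ^ n) * X _ ^ p from by ring]
        exact key _ _
    · intro r; simp
    · intro x y _ _ hx hy r
      have : r * (x + y) * f ^ n = r * x * f ^ n + r * y * f ^ n := by ring
      rw [this, coeff_add, hx, hy, add_zero]
    · intro a x _ hx r
      have : r * (a • x) * f ^ n = (r * a) * x * f ^ n := by
        rw [smul_eq_mul]; ring
      rw [this]
      exact hx (r * a)
  have main1 := main 1
  rw [one_mul] at main1
  -- now compute the coefficient directly: it is 1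
  -- the monomial of (X2 X3 X4 X5)^n
  have hmono : (X 2 * X 3 * X 4 * X 5 : MvPolynomial (Fin 6) k) ^ n
      = monomial (n • (Finsupp.single 2 1 + Finsupp.single 3 1
          + Finsupp.single 4 1 + Finsupp.single 5 1)) (1 : k) := by
    have : (X 2 * X 3 * X 4 * X 5 : MvPolynomial (Fin 6) k)
        = monomial (Finsupp.single 2 1 + Finsupp.single 3 1
            + Finsupp.single 4 1 + Finsupp.single 5 1) (1 : k) := by
      rw [show (X 2 : MvPolynomial (Fin 6) k) = monomial (Finsupp.single 2 1) 1 from rfl,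
        show (X 3 : MvPolynomial (Fin 6) k) = monomial (Finsupp.single 3 1) 1 from rfl,
        show (X 4 : MvPolynomial (Fin 6) k) = monomial (Finsupp.single 4 1) 1 from rfl,
        show (X 5 : MvPolynomial (Fin 6) k) = monomial (Finsupp.single 5 1) 1 from rfl,
        monomial_mul, monomial_mul, monomial_mul]
      norm_num
    rw [this, monomial_pow, one_pow]
  set E : Fin 6 →₀ ℕ := n • (Finsupp.single 2 1 + Finsupp.single 3 1
      + Finsupp.single 4 1 + Finsupp.single 5 1) with hE
  have hEapp : ∀ i, E i = if 2 ≤ (i : ℕ) then n else 0 := by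
    intro i
    fin_cases i <;> simp [hE, Finsupp.single_apply]
  have hEleM : E ≤ M := by
    rw [Finsupp.le_def]
    intro i
    rw [hEapp i, hM i]
    split <;> omega
  set D : Fin 6 →₀ ℕ := Finsupp.single 0 n + Finsupp.single 1 n with hD
  have hMD : M - E = D := by
    ext i
    rw [Finsupp.tsub_apply, hEapp i, hM i, hD]
    fin_cases i <;> simp [Finsupp.single_apply]
  rw [hmono, coeff_monomial_mul', if_pos hEleM, one_mul, hMD] at main1
  -- now show directly that `coeff D (f ^ n) = 1`, contradiction
  set u : MvPolynomial (Fin 6) k := X 0 * X 1 with hu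
  set w : MvPolynomial (Fin 6) k := X 2 * X 3 + X 4 * X 5 with hw
  have hfuw : f = u + w := by rw [hf, hu, hw]; ring
  have hwmono : w = monomial (Finsupp.single 2 1 + Finsupp.single 3 1) (1 : k)
      + monomial (Finsupp.single 4 1 + Finsupp.single 5 1) (1 : k) := by
    rw [hw,
      show (X 2 : MvPolynomial (Fin 6) k) = monomial (Finsupp.single 2 1) 1 from rfl,
      show (X 3 : MvPolynomial (Fin 6) k) = monomial (Finsupp.single 3 1) 1 from rfl,
      show (X 4 : MvPolynomial (Fin 6) k) = monomial (Finsupp.single 4 1) 1 from rfl,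
      show (X 5 : MvPolynomial (Fin 6) k) = monomial (Finsupp.single 5 1) 1 from rfl,
      monomial_mul, monomial_mul]
    norm_num
  have hgoodw : ∀ d : Fin 6 →₀ ℕ, d 0 ≠ 0 → coeff d w = 0 := by
    intro d hd
    rw [hwmono, coeff_add, coeff_monomial, coeff_monomial, if_neg, if_neg, add_zero]
    · intro h0; apply hd; rw [← h0]; simp
    · intro h0; apply hd; rw [← h0]; simp
  have humono : ∀ j : ℕ, u ^ j
      = monomial (Finsupp.single 0 j + Finsupp.single 1 j) (1 : k) := by
    intro j
    rw [hu,
      show (X 0 : MvPolynomial (Fin 6) k) = monomial (Finsupp.single 0 1) 1 from rfl,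
      show (X 1 : MvPolynomial (Fin 6) k) = monomial (Finsupp.single 1 1) 1 from rfl,
      monomial_mul, monomial_pow, one_mul, one_pow, smul_add, Finsupp.smul_single,
      Finsupp.smul_single, smul_eq_mul, mul_one]
  have hcoeffD : coeff D (f ^ n) = 1 := by
    rw [hfuw, add_pow, coeff_sum, Finset.sum_range_succ]
    have hlast : coeff D (u ^ n * w ^ (n - n) * ((n.choose n : ℕ) : MvPolynomial (Fin 6) k)) = 1 := by
      rw [Nat.sub_self, pow_zero, mul_one, Nat.choose_self, Nat.cast_one, mul_one,
        humono, coeff_monomial, if_pos, ]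
      rw [hD]
    have hrest : ∀ j ∈ Finset.range n,
        coeff D (u ^ j * w ^ (n - j) * ((n.choose j : ℕ) : MvPolynomial (Fin 6) k)) = 0 := by
      intro j hj
      have hj' : j < n := Finset.mem_range.mp hj
      have hc : ((n.choose j : ℕ) : MvPolynomial (Fin 6) k)
          = C ((n.choose j : ℕ) : k) := by rw [C_eq_coe_nat]
      have hcomm : u ^ j * w ^ (n - j) * ((n.choose j : ℕ) : MvPolynomial (Fin 6) k)
          = C ((n.choose j : ℕ) : k) * (monomial (Finsupp.single 0 j + Finsupp.single 1 j)
              (1 : k) * w ^ (n - j)) := by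
        rw [hc, ← humono]; ring
      rw [hcomm, coeff_C_mul, coeff_monomial_mul', if_pos, one_mul]
      · rw [good_pow hgoodw (n - j) _ ?_, mul_zero]
        rw [Finsupp.tsub_apply, hD]
        simp [Finsupp.single_apply]
        omega
      · rw [hD, Finsupp.le_def]
        intro i
        fin_cases i <;> simp [Finsupp.single_apply] <;> omega
    rw [Finset.sum_eq_zero hrest, zero_add, hlast]
  rw [hcoeffD] at main1
  exact one_ne_zero main1
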